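/- Dimonoid calculus: Let X be a dimonoid and let x_i ∈ X. (a) Any parenthesizing of the word x_{-n} ⊢ x_{-n+1} ⊢ ⋯ ⊢ x_{-1} ⊢ x_0 ⊣ x_1 ⊣ ⋯ ⊣ x_m gives the same element of X, denoted x_{-n}⋯x_{-1} x̌_0 x_1⋯x_m. (b) Any monomial in x_1,…,x_k (a choice of a full parenthesizing together with a choice of ⊣ or ⊢ at each vertex of the corresponding planar binary tree) equals x_1⋯x̌_i⋯x_k, where x_i is the middle entry of the monomial, i.e. the leaf reached by starting at the root of the labelled binary tree and going up, at every vertex choosing the branch indicated by the pointer of the product label at that vertex. (c) One has (x_1⋯x̌_i⋯x_k) ⊣ (x_{k+1}⋯x̌_j⋯x_ℓ) = x_1⋯x̌_i⋯x_ℓ and (x_1⋯x̌_i⋯x_k) ⊢ (x_{k+1}⋯x̌_j⋯x_ℓ) = x_1⋯x̌_j⋯x_ℓ. -/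

import Mathlib

/-- An (associative) dimonoid: a set with two binary operations `⊣` (`dashv`) and
`⊢` (`vdash`) satisfying the five dimonoid axioms. -/
class Dimonoid (X : Type*) where
  dashv : X → X → X
  vdash : X → X → X
  ax1 : ∀ x y z : X, dashv (dashv x y) z = dashv x (dashv y z)
  ax2 : ∀ x y z : X, dashv x (dashv y z) = dashv x (vdash y z)
  ax3 : ∀ x y z : X, dashv (vdash x y) z = vdash x (dashv y z)
  ax4 : ∀ x y z : X, vdash (dashv x y) z = vdash x (vdash y z)
  ax5 : ∀ x y z : X, vdash (vdash x y) z = vdash x (vdash y z)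

/-- The normal form `x₋ₙ ⋯ x₋₁ x̌₀ x₁ ⋯ xₘ`, i.e.
`(x₋ₙ ⊢ ⋯ ⊢ x₋₁) ⊢ x₀ ⊣ (x₁ ⊣ ⋯ ⊣ xₘ)`; well defined since `⊣` and `⊢` are
associative. -/
def Dimonoid.norm {X : Type*} [Dimonoid X] (l : List X) (x : X) (r : List X) : X :=
  r.foldl (fun b a => Dimonoid.dashv b a) (l.foldr (fun a b => Dimonoid.vdash a b) x)

/-- A monomial in a dimonoid: a full parenthesizing of a word, with a choice of
`⊣` or `⊢` at each vertex of the corresponding planar binary tree. -/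
inductive DiWord (X : Type*) : Type _
  | leaf : X → DiWord X
  | dashv : DiWord X → DiWord X → DiWord X
  | vdash : DiWord X → DiWord X → DiWord X

namespace DiWord

variable {X : Type*}

/-- The list of leaves (entries) of a monomial, from left to right. -/
def leaves : DiWord X → List X
  | leaf x => [x]
  | dashv a b => leaves a ++ leaves b
  | vdash a b => leaves a ++ leaves b

/-- The number of leaves of a monomial. -/
def size (t : DiWord X) : ℕ := t.leaves.length

/-- The position (0-indexed) of the middle entry of a monomial: starting at the root,
go up choosing at every vertex the branch indicated by the pointer of the product
label (`⊣` points to the left factor, `⊢` points to the right factor). -/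
def midIdx : DiWord X → ℕ
  | leaf _ => 0
  | dashv a _ => midIdx a
  | vdash a b => a.size + midIdx b

/-- The middle entry of a monomial (the abutment of the pointer path from the root). -/
def mid : DiWord X → X
  | leaf x => x
  | dashv a _ => mid a
  | vdash _ b => mid b

/-- Evaluation of a monomial in a dimonoid. -/
def eval [Dimonoid X] : DiWord X → X
  | leaf x => x
  | dashv a b => Dimonoid.dashv (eval a) (eval b)
  | vdash a b => Dimonoid.vdash (eval a) (eval b)

/-- `Shaped n off t` says that the monomial `t`, whose leaves occupy the (global)
positions `off, off+1, …` of a word whose distinguished letter `x₀` is at global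
position `n`, is a parenthesizing of (a segment of) the word
`x₋ₙ ⊢ ⋯ ⊢ x₋₁ ⊢ x₀ ⊣ x₁ ⊣ ⋯ ⊣ xₘ`: a vertex whose split point lies at or to the
left of `x₀` carries `⊢`, and a vertex whose split point lies strictly to the right
of `x₀` carries `⊣`. -/
def Shaped (n : ℕ) : ℕ → DiWord X → Prop
  | _, leaf _ => True
  | off, dashv a b => n < off + a.size ∧ Shaped n off a ∧ Shaped n (off + a.size) b
  | off, vdash a b => off + a.size ≤ n ∧ Shaped n off a ∧ Shaped n (off + a.size) b

end DiWord

section Aux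

variable {X : Type*} [Dimonoid X]

private lemma dashv_foldl (a b : X) (r : List X) :
    Dimonoid.dashv a (r.foldl (fun b a => Dimonoid.dashv b a) b) =
      r.foldl (fun b a => Dimonoid.dashv b a) (Dimonoid.dashv a b) := by
  induction r generalizing b with
  | nil => rfl
  | cons h r ih => simp only [List.foldl_cons, ih, Dimonoid.ax1]

private lemma vdash_foldl (a b : X) (r : List X) :
    Dimonoid.vdash a (r.foldl (fun b a => Dimonoid.dashv b a) b) =
      r.foldl (fun b a => Dimonoid.dashv b a) (Dimonoid.vdash a b) := by
  induction r generalizing b with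
  | nil => rfl
  | cons h r ih => simp only [List.foldl_cons, ih, Dimonoid.ax3]

private lemma dashv_foldr (a x : X) (l : List X) :
    Dimonoid.dashv a (l.foldr (fun a b => Dimonoid.vdash a b) x) =
      Dimonoid.dashv (l.foldl (fun b a => Dimonoid.dashv b a) a) x := by
  induction l generalizing a with
  | nil => rfl
  | cons h l ih =>
      simp only [List.foldr_cons, List.foldl_cons, ← Dimonoid.ax2, ← Dimonoid.ax1, ih,
        dashv_foldl]

private lemma vdash_foldr (x c : X) (l : List X) :
    Dimonoid.vdash (l.foldr (fun a b => Dimonoid.vdash a b) x) c =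
      l.foldr (fun a b => Dimonoid.vdash a b) (Dimonoid.vdash x c) := by
  induction l with
  | nil => rfl
  | cons h l ih => simp only [List.foldr_cons, Dimonoid.ax5, ih]

private lemma vdash_foldl_left (b c : X) (r : List X) :
    Dimonoid.vdash (r.foldl (fun b a => Dimonoid.dashv b a) b) c =
      Dimonoid.vdash b (r.foldr (fun a b => Dimonoid.vdash a b) c) := by
  induction r generalizing b with
  | nil => rfl
  | cons h r ih => simp only [List.foldl_cons, List.foldr_cons, ih, Dimonoid.ax4]

private lemma foldr_vdash_foldl (b : X) (r s : List X) :
    r.foldr (fun a b => Dimonoid.vdash a b) (s.foldl (fun b a => Dimonoid.dashv b a) b) =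
      s.foldl (fun b a => Dimonoid.dashv b a) (r.foldr (fun a b => Dimonoid.vdash a b) b) := by
  induction r with
  | nil => rfl
  | cons h r ih => simp only [List.foldr_cons, ih, vdash_foldl]

private lemma part_c_dashv (l₁ r₁ l₂ r₂ : List X) (x₁ x₂ : X) :
    Dimonoid.dashv (Dimonoid.norm l₁ x₁ r₁) (Dimonoid.norm l₂ x₂ r₂) =
      Dimonoid.norm l₁ x₁ (r₁ ++ l₂ ++ x₂ :: r₂) := by
  unfold Dimonoid.norm
  rw [dashv_foldl, dashv_foldr]
  simp only [List.foldl_append, List.foldl_cons]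

private lemma part_c_vdash (l₁ r₁ l₂ r₂ : List X) (x₁ x₂ : X) :
    Dimonoid.vdash (Dimonoid.norm l₁ x₁ r₁) (Dimonoid.norm l₂ x₂ r₂) =
      Dimonoid.norm (l₁ ++ x₁ :: (r₁ ++ l₂)) x₂ r₂ := by
  unfold Dimonoid.norm
  rw [vdash_foldl_left, foldr_vdash_foldl, vdash_foldl, vdash_foldr]
  simp only [List.foldr_append, List.foldr_cons]

private lemma size_pos (t : DiWord X) : 0 < t.size := by
  induction t with
  | leaf x => simp [DiWord.size, DiWord.leaves]
  | dashv a b iha ihb => simp [DiWord.size, DiWord.leaves] at *; omega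
  | vdash a b iha ihb => simp [DiWord.size, DiWord.leaves] at *; omega

private lemma midIdx_lt_size (t : DiWord X) : t.midIdx < t.size := by
  induction t with
  | leaf x => simp [DiWord.midIdx, DiWord.size, DiWord.leaves]
  | dashv a b iha ihb =>
      simp [DiWord.midIdx, DiWord.size, DiWord.leaves] at *
      have := size_pos (X := X) b; simp [DiWord.size] at this; omega
  | vdash a b iha ihb =>
      simp [DiWord.midIdx, DiWord.size, DiWord.leaves] at *; omega

private lemma leaves_decomp (t : DiWord X) :
    t.leaves = t.leaves.take t.midIdx ++ t.mid :: t.leaves.drop (t.midIdx + 1) := by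
  induction t with
  | leaf x => simp [DiWord.leaves, DiWord.midIdx, DiWord.mid]
  | dashv a b iha ihb =>
      have ha := midIdx_lt_size (X := X) a
      simp only [DiWord.leaves, DiWord.midIdx, DiWord.mid]
      rw [List.take_append_of_le_length (by exact_mod_cast ha.le),
        List.drop_append_of_le_length (by exact_mod_cast ha)]
      rw [← List.cons_append, ← List.append_assoc, ← iha]
  | vdash a b iha ihb =>
      simp only [DiWord.leaves, DiWord.midIdx, DiWord.mid, DiWord.size]
      rw [List.take_length_add_append, Nat.add_assoc, List.drop_length_add_append, List.append_assoc, ← ihb]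

private lemma part_b (t : DiWord X) :
    t.eval = Dimonoid.norm (t.leaves.take t.midIdx) t.mid (t.leaves.drop (t.midIdx + 1)) := by
  induction t with
  | leaf x => simp [DiWord.eval, DiWord.leaves, DiWord.midIdx, DiWord.mid, Dimonoid.norm]
  | dashv a b iha ihb =>
      have ha := midIdx_lt_size (X := X) a
      simp only [DiWord.eval, DiWord.leaves, DiWord.midIdx, DiWord.mid]
      rw [iha, ihb, part_c_dashv,
        List.take_append_of_le_length (by exact_mod_cast ha.le),
        List.drop_append_of_le_length (by exact_mod_cast ha)]
      congr 1
      rw [List.append_assoc]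
      congr 1
      exact (leaves_decomp b).symm
  | vdash a b iha ihb =>
      simp only [DiWord.eval, DiWord.leaves, DiWord.midIdx, DiWord.mid, DiWord.size]
      rw [iha, ihb, part_c_vdash, List.take_length_add_append, Nat.add_assoc, List.drop_length_add_append]
      congr 1
      conv_rhs => rw [leaves_decomp a]
      simp [List.append_assoc]

private lemma shaped_mid {t : DiWord X} {n off : ℕ} (h : DiWord.Shaped n off t)
    (h1 : off ≤ n) (h2 : n < off + t.size) : off + t.midIdx = n := by
  induction t generalizing off with
  | leaf x =>
      simp [DiWord.size, DiWord.leaves] at h2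
      simp [DiWord.midIdx]; omega
  | dashv a b iha ihb =>
      obtain ⟨hn, hsa, _⟩ := h
      exact iha hsa h1 hn
  | vdash a b iha ihb =>
      obtain ⟨hn, _, hsb⟩ := h
      have hs : (DiWord.vdash a b).size = a.size + b.size := by
        simp [DiWord.size, DiWord.leaves]
      have := ihb hsb hn (by omega)
      simp [DiWord.midIdx]; omega

end Aux

open Dimonoid in
/-- **Dimonoid calculus** (Loday, Theorem 1.7).  Let `X` be a dimonoid.

(a) Any parenthesizing of `x₋ₙ ⊢ ⋯ ⊢ x₋₁ ⊢ x₀ ⊣ x₁ ⊣ ⋯ ⊣ xₘ` gives the same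
element of `X`, namely the normal form `x₋ₙ ⋯ x₋₁ x̌₀ x₁ ⋯ xₘ`.

(b) Any monomial equals the normal form on its leaves, checked at its middle entry.

(c) `(x₁⋯x̌ᵢ⋯x_k) ⊣ (x_{k+1}⋯x̌ⱼ⋯x_ℓ) = x₁⋯x̌ᵢ⋯x_ℓ` and
`(x₁⋯x̌ᵢ⋯x_k) ⊢ (x_{k+1}⋯x̌ⱼ⋯x_ℓ) = x₁⋯x̌ⱼ⋯x_ℓ`. -/
theorem dimonoid_calculus {X : Type*} [Dimonoid X] :
    (∀ (l r : List X) (x : X) (t : DiWord X),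
      t.leaves = l ++ x :: r → DiWord.Shaped l.length 0 t →
        t.eval = norm l x r) ∧
    (∀ t : DiWord X,
      t.eval = norm (t.leaves.take t.midIdx) t.mid (t.leaves.drop (t.midIdx + 1))) ∧
    (∀ (l₁ r₁ l₂ r₂ : List X) (x₁ x₂ : X),
      Dimonoid.dashv (norm l₁ x₁ r₁) (norm l₂ x₂ r₂) =
          norm l₁ x₁ (r₁ ++ l₂ ++ x₂ :: r₂) ∧
      Dimonoid.vdash (norm l₁ x₁ r₁) (norm l₂ x₂ r₂) =
          norm (l₁ ++ x₁ :: (r₁ ++ l₂)) x₂ r₂) := by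
  refine ⟨?_, part_b, fun l₁ r₁ l₂ r₂ x₁ x₂ => ⟨part_c_dashv .., part_c_vdash ..⟩⟩
  intro l r x t hle hsh
  have hlen : t.size = l.length + 1 + r.length := by
    simp [DiWord.size, hle]; omega
  have hmid : t.midIdx = l.length := by
    have := shaped_mid hsh (Nat.zero_le _) (by omega)
    omega
  have hdec := leaves_decomp (X := X) t
  rw [hle, hmid] at hdec
  have hlt : l.length ≤ (l ++ x :: r).length := by simp
  have h1 : (l ++ x :: r).take l.length = l := by
    simp [List.take_append_of_le_length (le_refl l.length)]
  have h2 : t.mid = x ∧ (l ++ x :: r).drop (l.length + 1) = r := by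
    rw [h1] at hdec
    have := List.append_cancel_left hdec
    exact ⟨(List.cons.injEq _ _ _ _ ▸ this).1.symm,
      ((List.cons.injEq _ _ _ _ ▸ this).2).symm⟩
  rw [part_b t, hmid, hle, h1, h2.1, h2.2]
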